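/- arXiv:2510.09219 — 6 statements merged into one kernel-verified Lean document; each statement's English description precedes it below -/
import Mathlib

section
/- Let A be a commutative unital ring, u a unit of A, and (a_1,…,a_n) ∈ A^n. If n = 2l is even then K_{2l}(u·a_1, u^{−1}·a_2, u·a_3, …, u·a_{2l−1}, u^{−1}·a_{2l}) = K_{2l}(a_1,…,a_{2l}). If n = 2l+1 is odd then K_{2l+1}(u·a_1, u^{−1}·a_2, …, u·a_{2l−1}, u^{−1}·a_{2l}, u·a_{2l+1}) = u·K_{2l+1}(a_1,…,a_{2l+1}). -/
namespace Quiddity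

variable {A : Type*} [CommRing A]

/-- `mMat [a₁, …, aₙ]` is the matrix product `[[aₙ,-1],[1,0]] ⋯ [[a₁,-1],[1,0]]`. -/
def mMat : List A → Matrix (Fin 2) (Fin 2) A
  | [] => 1
  | a :: t => mMat t * !![a, -1; 1, 0]

/-- Continuant: `cont [] = K₀ = 1`, `cont [a] = K₁(a) = a`, and the continuant recursion. -/
def cont : List A → A
  | [] => 1
  | [a] => a
  | a :: b :: t => a * cont (b :: t) - cont t

/-- A λ-quiddity is a tuple with `Mₙ(a₁,…,aₙ) = ± Id`. -/
def IsQuiddity (l : List A) : Prop := mMat l = 1 ∨ mMat l = -1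

/-- The sum `⊕` of two tuples (meaningful for tuples of length ≥ 2):
`(a₁,…,aₘ) ⊕ (b₁,…,b_l) = (a₁+b_l, a₂,…,a_{m−1}, aₘ+b₁, b₂,…,b_{l−1})`. -/
def oplus (la lb : List A) : List A :=
  (la.headD 0 + lb.getLastD 0) ::
    (la.tail.dropLast ++ (la.getLastD 0 + lb.headD 0) :: lb.tail.dropLast)

/-- Two tuples are equivalent if one is a cyclic permutation of the other or of its
reversal. -/
def TupleEquiv (l l' : List A) : Prop :=
  List.IsRotated l l' ∨ List.IsRotated l.reverse l'

/-- A λ-quiddity `c` is reducible if `c ∼ a ⊕ b` with `b` a λ-quiddity and both of size ≥ 3. -/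
def QuiddityReducible (c : List A) : Prop :=
  ∃ a b : List A, 3 ≤ a.length ∧ 3 ≤ b.length ∧ IsQuiddity b ∧ TupleEquiv c (oplus a b)

/-- `(a, b, a, b, …, a, b)` with `k` repetitions of the pair `(a, b)` (size `2k`). -/
def dynList : ℕ → A → A → List A
  | 0, _, _ => []
  | k + 1, a, b => a :: b :: dynList k a b

/-- `(u, v, v, u, v, v, …, u, v, v)` with `k` repetitions of the block `(u, v, v)`
(size `3k`). -/
def triList : ℕ → A → A → List A
  | 0, _, _ => []
  | k + 1, a, b => a :: b :: b :: triList k a b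

end Quiddity

open Quiddity

section Aux

variable {A : Type*} [CommRing A]

/-- Alternately scale a list by `v, v⁻¹, v, v⁻¹, …`. -/
def mapAlt (v : Aˣ) : List A → List A
  | [] => []
  | a :: t => ((v : A) * a) :: mapAlt v⁻¹ t

lemma cont_mapAlt (v : Aˣ) (l : List A) :
    cont (mapAlt v l) = if l.length % 2 = 0 then cont l else (v : A) * cont l := by
  suffices H : ∀ (n : ℕ) (l : List A), l.length ≤ n → ∀ v : Aˣ,
      cont (mapAlt v l) = if l.length % 2 = 0 then cont l else (v : A) * cont l by
    exact H l.length l le_rfl v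
  clear l v
  intro n
  induction n with
  | zero =>
    intro l hl v
    have : l = [] := List.eq_nil_of_length_eq_zero (Nat.le_zero.mp hl)
    subst this; simp [mapAlt, cont]
  | succ n ihn =>
    intro l hl v
    have ih : ∀ m : List A, m.length < l.length → ∀ v : Aˣ,
        cont (mapAlt v m) = if m.length % 2 = 0 then cont m else (v : A) * cont m :=
      fun m hm v => ihn m (by omega) v
    match l with
    | [] => simp [mapAlt, cont]
    | [a] => simp [mapAlt, cont]
    | a :: b :: t =>
      have h1 : cont (mapAlt v⁻¹ (b :: t)) =
          if (b :: t).length % 2 = 0 then cont (b :: t) else ((v⁻¹ : Aˣ) : A) * cont (b :: t) :=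
        ih _ (by simp) v⁻¹
      have h2 : cont (mapAlt v t) =
          if t.length % 2 = 0 then cont t else (v : A) * cont t :=
        ih _ (by simp) v
      show cont (((v : A) * a) :: mapAlt v⁻¹ (b :: t)) = _
      have hm : mapAlt v⁻¹ (b :: t) = (((v⁻¹ : Aˣ) : A) * b) :: mapAlt (v⁻¹)⁻¹ t := rfl
      rw [hm]
      rw [show cont ((((v : A)) * a) :: (((v⁻¹ : Aˣ) : A) * b) :: mapAlt (v⁻¹)⁻¹ t)
          = ((v : A) * a) * cont ((((v⁻¹ : Aˣ) : A) * b) :: mapAlt (v⁻¹)⁻¹ t)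
            - cont (mapAlt (v⁻¹)⁻¹ t) from rfl, ← hm, h1]
      rw [inv_inv] at *
      rw [h2]
      rcases Nat.even_or_odd t.length with he | ho
      · have ht : t.length % 2 = 0 := Nat.even_iff.mp he
        have : (b :: t).length % 2 = 1 := by simp [List.length_cons, Nat.add_mod, ht]
        have hl : (a :: b :: t).length % 2 = 0 := by simp [List.length_cons, Nat.add_mod, ht]
        rw [this, ht, hl]
        norm_num
        rw [show cont (a :: b :: t) = a * cont (b :: t) - cont t from rfl]
        have huv : (v : A) * ((v⁻¹ : Aˣ) : A) = 1 := by exact_mod_cast v.mul_inv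
        linear_combination cont (b :: t) * a * huv
      · have ht : t.length % 2 = 1 := Nat.odd_iff.mp ho
        have hbt : (b :: t).length % 2 = 0 := by simp [List.length_cons, Nat.add_mod, ht]
        have hl : (a :: b :: t).length % 2 = 1 := by simp [List.length_cons, Nat.add_mod, ht]
        rw [ht, hbt, hl]
        norm_num
        rw [show cont (a :: b :: t) = a * cont (b :: t) - cont t from rfl]
        ring

lemma ofFn_eq_mapAlt (v : Aˣ) : ∀ (n : ℕ) (a : Fin n → A),
    List.ofFn (fun i => (if (i : ℕ) % 2 = 0 then (v : A) else ((v⁻¹ : Aˣ) : A)) * a i)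
      = mapAlt v (List.ofFn a) := by
  intro n
  induction n generalizing v with
  | zero => intro a; simp [mapAlt]
  | succ n ih =>
    intro a
    rw [List.ofFn_succ, List.ofFn_succ (f := a)]
    show _ :: _ = ((v : A) * a 0) :: mapAlt v⁻¹ (List.ofFn fun i => a i.succ)
    rw [← ih v⁻¹ (fun i => a i.succ)]
    refine congrArg₂ List.cons (by simp) ?_
    refine congrArg List.ofFn ?_
    funext i
    rcases Nat.even_or_odd (i : ℕ) with h | h
    · simp [Fin.val_succ, Nat.add_mod, Nat.even_iff.mp h]
    · simp [Fin.val_succ, Nat.add_mod, Nat.odd_iff.mp h, inv_inv]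

end Aux

/-- alternately scaling a tuple by `u, u⁻¹, u, u⁻¹, …` leaves the continuant
unchanged when the length is even, and multiplies it by `u` when the length is odd. -/
theorem stmt1 (A : Type*) [CommRing A] (u : Aˣ) :
    (∀ (l : ℕ) (a : Fin (2 * l) → A),
      cont (List.ofFn fun i =>
          (if (i : ℕ) % 2 = 0 then (u : A) else ((u⁻¹ : Aˣ) : A)) * a i)
        = cont (List.ofFn a)) ∧
    (∀ (l : ℕ) (a : Fin (2 * l + 1) → A),
      cont (List.ofFn fun i =>
          (if (i : ℕ) % 2 = 0 then (u : A) else ((u⁻¹ : Aˣ) : A)) * a i)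
        = (u : A) * cont (List.ofFn a)) := by
  constructor
  · intro l a
    rw [ofFn_eq_mapAlt, cont_mapAlt]
    simp [Nat.mul_mod_right]
  · intro l a
    rw [ofFn_eq_mapAlt, cont_mapAlt]
    simp [Nat.add_mod, Nat.mul_mod_right]
end

section
/- Let A be a commutative unital ring, n ≥ 1 and (a_1,…,a_n) ∈ A^n such that K_n(a_1,…,a_n) = ε where ε = 1 or ε = −1. Set x := ε·K_{n−1}(a_2,…,a_n) and y := ε·K_{n−1}(a_1,…,a_{n−1}). Then M_{n+2}(x, a_1, …, a_n, y) = −ε·Id. -/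
namespace Quiddity

variable {A : Type*} [CommRing A]

theorem mMat_append (s t : List A) : mMat (s ++ t) = mMat t * mMat s := by
  induction s with
  | nil => simp [mMat]
  | cons a s ih => simp [mMat, ih, Matrix.mul_assoc]

theorem mMat_eq (a b : A) (t : List A) :
    mMat (a :: b :: t) = !![cont (a :: b :: t), -cont (b :: t);
      cont ((a :: b :: t).dropLast), -cont ((b :: t).dropLast)] := by
  induction t generalizing a b with
  | nil =>
    show mMat [b] * _ = _
    show (1 : Matrix (Fin 2) (Fin 2) A) * !![b,-1;1,0] * !![a,-1;1,0] = _
    simp [cont]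
    ring
  | cons c t ih =>
    show mMat (b :: c :: t) * !![a,-1;1,0] = _
    rw [ih b c]
    have h1 : cont (a :: b :: c :: t) = a * cont (b :: c :: t) - cont (c :: t) := rfl
    have h2 : ((a :: b :: c :: t).dropLast) = a :: (b :: c :: t).dropLast := rfl
    have h3 : ((b :: c :: t).dropLast) = b :: (c :: t).dropLast := rfl
    rw [h1, h2, h3]
    have h4 : cont (a :: b :: (c :: t).dropLast)
        = a * cont (b :: (c :: t).dropLast) - cont ((c :: t).dropLast) := rfl
    rw [h4]
    ext i j; fin_cases i <;> fin_cases j <;>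
      simp [Matrix.mul_apply, Fin.sum_univ_succ] <;> ring

theorem det_mMat (l : List A) : (mMat l).det = 1 := by
  induction l with
  | nil => simp [mMat]
  | cons a t ih => simp [mMat, Matrix.det_mul, ih, Matrix.det_fin_two_of]

end Quiddity

open Quiddity

/-- if `Kₙ(a₁,…,aₙ) = ε = ±1`, setting `x := ε·K_{n−1}(a₂,…,aₙ)` and
`y := ε·K_{n−1}(a₁,…,a_{n−1})`, one has `M_{n+2}(x, a₁, …, aₙ, y) = −ε·Id`. -/
theorem stmt3 (A : Type*) [CommRing A] (l : List A) (hl : 1 ≤ l.length)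
    (ε : A) (hε : ε = 1 ∨ ε = -1) (h : cont l = ε) :
    mMat ((ε * cont l.tail) :: (l ++ [ε * cont l.dropLast]))
      = (-ε) • (1 : Matrix (Fin 2) (Fin 2) A) := by
  obtain ⟨a, t, rfl⟩ : ∃ a t, l = a :: t := by
    cases l with
    | nil => simp at hl
    | cons a t => exact ⟨a, t, rfl⟩
  rcases t with _ | ⟨b, t⟩
  · simp only [cont, List.tail_cons, List.dropLast_singleton] at h ⊢
    show (1 : Matrix (Fin 2) (Fin 2) A) * !![ε * cont [],-1;1,0] * !![a,-1;1,0]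
        * !![ε * cont ([] : List A),-1;1,0] = _
    subst h
    rcases hε with rfl | rfl <;>
      · ext i j
        fin_cases i <;> fin_cases j <;>
          simp [Matrix.mul_apply, Fin.sum_univ_succ, cont]
  · have hL : (ε * cont (a::b::t).tail) :: ((a::b::t) ++ [ε * cont (a::b::t).dropLast])
        = ((ε * cont (b::t)) :: (a::b::t)) ++ [ε * cont (a::b::t).dropLast] := rfl
    rw [hL, mMat_append]
    have hy : mMat [ε * cont (a::b::t).dropLast]
        = (1 : Matrix (Fin 2) (Fin 2) A) * !![ε * cont (a::b::t).dropLast, -1; 1, 0] := rfl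
    have hx : mMat ((ε * cont (b::t)) :: a :: b :: t)
        = mMat (a::b::t) * !![ε * cont (b::t),-1;1,0] := rfl
    rw [hy, hx, mMat_eq]
    have hdet := det_mMat (a::b::t)
    rw [mMat_eq, Matrix.det_fin_two_of] at hdet
    rw [h] at hdet ⊢
    set d := cont (b::t)
    set e := cont ((a::b::t).dropLast)
    set f := cont ((b::t).dropLast)
    clear hx hy hL h hl
    clear_value d e f
    rcases hε with rfl | rfl <;>
      · ext i j
        fin_cases i <;> fin_cases j <;>
          simp [Matrix.mul_apply, Fin.sum_univ_succ]
        all_goals first | ring1 | linear_combination hdet | linear_combination (-1 : A) * hdet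
end

section
/- Let A be a finite commutative unital ring and let u be a unit of A with u ≠ 1, u ≠ −1 and u ≠ u^{−1}. Then M_6(u, u^{−1}, u, u^{−1}, u, u^{−1}) = Id, the (u, u^{−1})-dynomial minimal solution over A has size 6, and it is irreducible. -/
open Quiddity

section Aux

variable {A : Type*} [CommRing A]

lemma mMat3_entry (x y z : A) : mMat [x, y, z] 1 1 = -y := by
  simp [mMat, Matrix.mul_fin_two, Matrix.one_fin_two]

lemma mMat4_entry (w x y z : A) : mMat [w, x, y, z] 1 1 = -(y * x - 1) := by
  simp [mMat, Matrix.mul_fin_two, Matrix.one_fin_two]; ring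

lemma mMat5_entry (p x y z q : A) : mMat [p, x, y, z, q] 1 1 = -(x * y * z - x - z) := by
  simp [mMat, Matrix.mul_fin_two, Matrix.one_fin_two]; ring

lemma quid_entry {l : List A} (h : IsQuiddity l) : mMat l 1 1 = 1 ∨ mMat l 1 1 = -1 := by
  rcases h with h | h
  · left; rw [h]; simp
  · right; rw [h]; simp

lemma ex3 (l : List A) (h : l.length = 3) : ∃ a b c, l = [a, b, c] := by
  rcases l with _ | ⟨a, _ | ⟨b, _ | ⟨c, _ | _⟩⟩⟩ <;> simp_all
lemma ex4 (l : List A) (h : l.length = 4) : ∃ a b c d, l = [a, b, c, d] := by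
  rcases l with _ | ⟨a, _ | ⟨b, _ | ⟨c, _ | ⟨d, _ | _⟩⟩⟩⟩ <;> simp_all
lemma ex5 (l : List A) (h : l.length = 5) : ∃ a b c d e, l = [a, b, c, d, e] := by
  rcases l with _ | ⟨a, _ | ⟨b, _ | ⟨c, _ | ⟨d, _ | ⟨e, _ | _⟩⟩⟩⟩⟩ <;> simp_all

lemma rot6 {u v : A} {l' : List A} (h : TupleEquiv [u, v, u, v, u, v] l') :
    l' = [u, v, u, v, u, v] ∨ l' = [v, u, v, u, v, u] := by
  rcases h with h | h
  · obtain ⟨n, hn, rfl⟩ := List.isRotated_iff_mod.mp h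
    have hn' : n ≤ 6 := by simpa using hn
    interval_cases n <;> simp [List.rotate_cons_succ]
  · rw [show ([u,v,u,v,u,v] : List A).reverse = [v,u,v,u,v,u] by simp] at h
    obtain ⟨n, hn, rfl⟩ := List.isRotated_iff_mod.mp h
    have hn' : n ≤ 6 := by simpa using hn
    interval_cases n <;> simp [List.rotate_cons_succ]

end Aux

/-- for a unit `u` of a finite commutative ring with `u ≠ 1`, `u ≠ −1`,
`u ≠ u⁻¹`, one has `M₆(u, u⁻¹, u, u⁻¹, u, u⁻¹) = Id`, the `(u, u⁻¹)`-dynomial minimal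
solution has size 6, and it is irreducible. -/
theorem stmt8 (A : Type*) [CommRing A] [Fintype A] (u : Aˣ)
    (hu1 : u ≠ 1) (hu2 : u ≠ -1) (huv : u ≠ u⁻¹) :
    mMat (dynList 3 (u : A) ((u⁻¹ : Aˣ) : A)) = 1 ∧
    IsQuiddity (dynList 3 (u : A) ((u⁻¹ : Aˣ) : A)) ∧
    (∀ k, 0 < k → IsQuiddity (dynList k (u : A) ((u⁻¹ : Aˣ) : A)) → 3 ≤ k) ∧
    ¬ QuiddityReducible (dynList 3 (u : A) ((u⁻¹ : Aˣ) : A)) := by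
  set v : A := ((u⁻¹ : Aˣ) : A) with hv_def
  have hv : (u : A) * v = 1 := by simp [hv_def]
  have hu1' : (u : A) ≠ 1 := fun h => hu1 (Units.ext (by simpa using h))
  have hu2' : (u : A) ≠ -1 := fun h => hu2 (Units.ext (by simpa using h))
  have : Nontrivial A := nontrivial_of_ne (u : A) 1 hu1'
  have hv1' : v ≠ 1 := fun h => hu1' (by rw [← hv, h, mul_one])
  have hv2' : v ≠ -1 := fun h => hu2' (by
    have : (u : A) * (-1) = 1 := by rw [← h]; exact hv
    linear_combination -this)
  have huv' : (u : A) ≠ v := fun h => huv (Units.ext (by simpa [hv_def] using h))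
  have part1 : mMat (dynList 3 (u : A) v) = 1 := by
    simp only [dynList, mMat, Matrix.mul_fin_two, Matrix.one_fin_two, Matrix.one_mul]
    ext i j
    fin_cases i <;> fin_cases j <;> simp
    · linear_combination (2*(u:A)^2*v^2 - 6*(u:A)*v + 3 - ((u:A)*v-1)^2) * hv
    · linear_combination (-v*((u:A)*v-3)) * hv
    · linear_combination ((u:A)*((u:A)*v-3)) * hv
    · linear_combination ((u:A)^2*v^2 - 3*(u:A)*v + 3 - ((u:A)*v-1)^2) * hv
  refine ⟨part1, Or.inl part1, ?_, ?_⟩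
  · -- minimality
    intro k hk hq
    by_contra hk3
    interval_cases k
    · have e : mMat [(u:A), v] 0 1 = -v := by
        simp [mMat, Matrix.mul_fin_two, Matrix.one_fin_two]
      have h0 : mMat [(u:A), v] 0 1 = 0 := by
        rcases hq with h | h
        · rw [show mMat [(u:A), v] = 1 from h]; simp
        · rw [show mMat [(u:A), v] = -1 from h]; simp
      rw [e] at h0
      exact Units.ne_zero u⁻¹ (show v = 0 by linear_combination -h0)
    · have e : mMat [(u:A), v, (u:A), v] 0 1 = v + v - v*(u:A)*v := by
        simp [mMat, Matrix.mul_fin_two, Matrix.one_fin_two]; ring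
      have h0 : mMat [(u:A), v, (u:A), v] 0 1 = 0 := by
        rcases hq with h | h
        · rw [show mMat [(u:A), v, (u:A), v] = 1 from h]; simp
        · rw [show mMat [(u:A), v, (u:A), v] = -1 from h]; simp
      rw [e] at h0
      exact Units.ne_zero u⁻¹ (show v = 0 by linear_combination h0 + v * hv)
  · -- irreducibility
    rintro ⟨a, b, ha3, hb3, hbq, hequiv⟩
    have hc : dynList 3 (u : A) v = [(u:A), v, (u:A), v, (u:A), v] := rfl
    rw [hc] at hequiv
    have hrot := rot6 hequiv
    -- length analysis
    have hlen : (oplus a b).length = 6 := by rcases hrot with h | h <;> simp [h]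
    have hlen' : a.length + b.length = 8 := by
      simp only [oplus, List.length_cons, List.length_append, List.length_dropLast,
        List.length_tail] at hlen
      omega
    have hb345 : b.length = 3 ∨ b.length = 4 ∨ b.length = 5 := by omega
    have hquid := quid_entry hbq
    rcases hb345 with hb | hb | hb
    · -- b has length 3, a has length 5
      obtain ⟨b1, b2, b3, rfl⟩ := ex3 b hb
      obtain ⟨a1, a2, a3, a4, a5, rfl⟩ := ex5 a (by omega)
      rw [mMat3_entry] at hquid
      simp only [oplus] at hrot
      simp at hrot
      -- from hrot, b2 = v or b2 = u
      rcases hrot with ⟨_,_,_,_,_,h2⟩ | ⟨_,_,_,_,_,h2⟩ <;> subst h2 <;>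
        rcases hquid with h | h
      · exact hv2' (by linear_combination -h)
      · exact hv1' (by linear_combination -h)
      · exact hu2' (by linear_combination -h)
      · exact hu1' (by linear_combination -h)
    · -- b has length 4, a has length 4
      obtain ⟨b1, b2, b3, b4, rfl⟩ := ex4 b hb
      obtain ⟨a1, a2, a3, a4, rfl⟩ := ex4 a (by omega)
      rw [mMat4_entry] at hquid
      simp only [oplus] at hrot
      simp at hrot
      rcases hrot with ⟨-, -, -, -, h2, h3⟩ | ⟨-, -, -, -, h2, h3⟩ <;> subst h2 <;> subst h3 <;>
        rcases hquid with h | h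
      · exact one_ne_zero (show (1:A) = 0 by linear_combination -h - hv)
      · exact one_ne_zero (show (1:A) = 0 by linear_combination h + hv)
      · exact one_ne_zero (show (1:A) = 0 by linear_combination -h - hv)
      · exact one_ne_zero (show (1:A) = 0 by linear_combination h + hv)
    · -- b has length 5, a has length 3
      obtain ⟨b1, b2, b3, b4, b5, rfl⟩ := ex5 b hb
      obtain ⟨a1, a2, a3, rfl⟩ := ex3 a (by omega)
      rw [mMat5_entry] at hquid
      simp only [oplus] at hrot
      simp at hrot
      rcases hrot with ⟨-, -, -, h2, h3, h4⟩ | ⟨-, -, -, h2, h3, h4⟩ <;> subst h2 <;>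
        subst h3 <;> subst h4 <;> rcases hquid with h | h
      · exact hv1' (by linear_combination h + v * hv)
      · exact hv2' (by linear_combination h + v * hv)
      · exact hu1' (by linear_combination h + (u:A) * hv)
      · exact hu2' (by linear_combination h + (u:A) * hv)
end

section
/- Let A be a finite commutative unital ring, n ≥ 5 an integer, x, y ∈ A and a, b units of A with a ≠ b. (i) If n is even and the n-tuple (x, a, b, a, b, …, a, b, y) ∈ A^n (first entry x, last entry y, alternating a, b in between starting with a and ending with b) is a λ-quiddity over A, then y = a·b^{−1}·x and x·(b − x) = 0. (ii) If n is odd and the n-tuple (x, a, b, a, b, …, a, b, a, y) ∈ A^n (first entry x, last entry y, alternating a, b in between starting and ending with a) is a λ-quiddity over A, then y = x and x·(a − a·b^{−1}·x) = 1 − a·b^{−1}. -/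
open Quiddity

section Stmt9Aux

variable {A : Type*} [CommRing A]

lemma stmt9_mMat_append (l1 l2 : List A) : mMat (l1 ++ l2) = mMat l2 * mMat l1 := by
  induction l1 with
  | nil => simp [mMat]
  | cons h t ih => simp [mMat, ih, mul_assoc]

lemma stmt9_dyn_form (a b : A) (k : ℕ) :
    ∃ c d : A, mMat (dynList k a b) = !![c*(a*b-1)+d, -(c*b); c*a, d-c] := by
  induction k with
  | zero =>
      refine ⟨0, 1, ?_⟩
      show (1 : Matrix (Fin 2) (Fin 2) A) = _
      ext i j
      fin_cases i <;> fin_cases j <;> simp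
  | succ k ih =>
      obtain ⟨c, d, h⟩ := ih
      refine ⟨c*(a*b-2)+d, -c, ?_⟩
      show mMat (a :: b :: dynList k a b) = _
      simp only [mMat, h]
      ext i j
      fin_cases i <;> fin_cases j <;>
        simp [Matrix.mul_apply, Fin.sum_univ_succ] <;> ring

lemma stmt9_eq_entries {p q r s p' q' r' s' : A}
    (h : (!![p,q;r,s] : Matrix (Fin 2) (Fin 2) A) = !![p',q';r',s']) :
    p = p' ∧ q = q' ∧ r = r' ∧ s = s' :=
  ⟨by simpa using congrFun (congrFun h 0) 0, by simpa using congrFun (congrFun h 0) 1,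
   by simpa using congrFun (congrFun h 1) 0, by simpa using congrFun (congrFun h 1) 1⟩

lemma stmt9_triple_prod (u v w z p q r s x : A) :
    (!![u,v;w,z] : Matrix (Fin 2) (Fin 2) A) * !![p,q;r,s] * !![x,-1;1,0] =
      !![(u*p + v*r)*x + (u*q + v*s), -(u*p + v*r);
         (w*p + z*r)*x + (w*q + z*s), -(w*p + z*r)] := by
  ext i j
  fin_cases i <;> fin_cases j <;>
    simp [Matrix.mul_apply, Fin.sum_univ_succ] <;> ring

lemma stmt9_mul2 (y a : A) :
    (!![y,-1;1,0] : Matrix (Fin 2) (Fin 2) A) * !![a,-1;1,0] = !![y*a-1, -y; a, -1] := by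
  ext i j
  fin_cases i <;> fin_cases j <;>
    simp [Matrix.mul_apply, Fin.sum_univ_succ] <;> ring

lemma stmt9_eps {l : List A} (h : IsQuiddity l) :
    ∃ ε : A, ε * ε = 1 ∧ mMat l = !![ε, 0; 0, ε] := by
  rcases h with h | h
  · refine ⟨1, by ring, ?_⟩
    rw [h]
    ext i j; fin_cases i <;> fin_cases j <;> simp
  · refine ⟨-1, by ring, ?_⟩
    rw [h]
    ext i j; fin_cases i <;> fin_cases j <;> simp

end Stmt9Aux


/-- values forced at the ends of a λ-quiddity of the form
`(x, a, b, …, a, b, y)` (n even) or `(x, a, b, …, a, b, a, y)` (n odd), `n ≥ 5`. -/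
theorem stmt9 (A : Type*) [CommRing A] [Fintype A] (x y : A) (a b : Aˣ) (hab : a ≠ b) :
    (∀ n k : ℕ, 5 ≤ n → n = 2 * k + 2 →
      IsQuiddity (x :: (dynList k (a : A) (b : A) ++ [y])) →
      y = (a : A) * ((b⁻¹ : Aˣ) : A) * x ∧ x * ((b : A) - x) = 0) ∧
    (∀ n k : ℕ, 5 ≤ n → n = 2 * k + 3 →
      IsQuiddity (x :: (dynList k (a : A) (b : A) ++ [(a : A), y])) →
      y = x ∧
        x * ((a : A) - (a : A) * ((b⁻¹ : Aˣ) : A) * x)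
          = 1 - (a : A) * ((b⁻¹ : Aˣ) : A)) := by
  constructor
  · intro n k hn hnk hq
    obtain ⟨c, d, hD⟩ := stmt9_dyn_form (a : A) (b : A) k
    obtain ⟨ε, hε, hq'⟩ := stmt9_eps hq
    set ai : A := ((a⁻¹ : Aˣ) : A) with hai
    set bi : A := ((b⁻¹ : Aˣ) : A) with hbi
    have ha : (a : A) * ai = 1 := a.mul_inv
    have hb : (b : A) * bi = 1 := b.mul_inv
    have H : (!![y,-1;1,0] : Matrix (Fin 2) (Fin 2) A) *
        !![c*((a:A)*(b:A)-1)+d, -(c*(b:A)); c*(a:A), d-c] * !![x,-1;1,0]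
        = !![ε, 0; 0, ε] := by
      rw [← hD, ← hq']
      show _ = mMat (x :: (dynList k (a:A) (b:A) ++ [y]))
      simp only [mMat, stmt9_mMat_append, one_mul, mul_assoc]
    rw [stmt9_triple_prod] at H
    obtain ⟨e00, e01, e10, e11⟩ := stmt9_eq_entries H
    set p : A := c*((a:A)*(b:A)-1)+d with hp0
    have hS : p = -ε := by linear_combination -e11
    have hx : x = -(ε*(c*(b:A))) := by
      linear_combination (-ε)*e10 + (ε*x)*hS - x*hε
    have hy : y = -(ε*(c*(a:A))) := by
      linear_combination ε*e01 + (ε*y)*hS - y*hε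
    constructor
    · linear_combination hy - ((a:A)*bi)*hx + (ε*c*(a:A))*hb
    · have h1 : y*(c*(b:A)) = c*((a:A)*(b:A)) := by
        linear_combination -e00 - x*e01 - hS
      have h2 : c*((a:A)*(b:A)) + ε*(c*c*((a:A)*(b:A))) = 0 := by
        linear_combination (c*(b:A))*hy - h1
      have hc : c + ε*(c*c) = 0 := by
        linear_combination (ai*bi)*h2 - ((c+ε*(c*c))*((b:A)*bi))*ha - (c+ε*(c*c))*hb
      linear_combination ((b:A) - x + ε*(c*(b:A)))*hx - ε*(b:A)^2*hc
  · intro n k hn hnk hq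
    obtain ⟨c, d, hD⟩ := stmt9_dyn_form (a : A) (b : A) k
    obtain ⟨ε, hε, hq'⟩ := stmt9_eps hq
    set ai : A := ((a⁻¹ : Aˣ) : A) with hai
    set bi : A := ((b⁻¹ : Aˣ) : A) with hbi
    have ha : (a : A) * ai = 1 := a.mul_inv
    have hb : (b : A) * bi = 1 := b.mul_inv
    have H : (!![y*(a:A)-1, -y; (a:A), -1] : Matrix (Fin 2) (Fin 2) A) *
        !![c*((a:A)*(b:A)-1)+d, -(c*(b:A)); c*(a:A), d-c] * !![x,-1;1,0]
        = !![ε, 0; 0, ε] := by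
      rw [← stmt9_mul2, ← hD, ← hq']
      show _ = mMat (x :: (dynList k (a:A) (b:A) ++ [(a:A), y]))
      simp only [mMat, stmt9_mMat_append, one_mul, mul_assoc]
    rw [stmt9_triple_prod] at H
    obtain ⟨e00, e01, e10, e11⟩ := stmt9_eq_entries H
    set p : A := c*((a:A)*(b:A)-1)+d with hp0
    have hA : (a:A)*p - c*(a:A) = -ε := by linear_combination -e11
    have hp : p = -(ε*y) := by linear_combination e01 + y*hA
    have hca : c*(a:A) = ε - ε*((a:A)*y) := by linear_combination (a:A)*hp - hA
    have hxy : y = x := by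
      linear_combination ε*e10 - (ε*x)*hA + ε*hp - (y - x)*hε
    have hyy : y*y = 1 - ε*(c*(b:A)) := by
      linear_combination ε*e00 + (ε*x)*e01 + (ε*y)*hp - (y*y-1)*hε
    refine ⟨hxy, ?_⟩
    rw [hxy] at hyy hca
    linear_combination (-(a:A)*bi)*hyy + (ε*(c*(a:A)))*hb + ε*hca - ((a:A)*x - 1)*hε
end

section
/- Let K be a finite field of characteristic different from 2 and let a, b be nonzero elements of K with a ≠ b, a ∉ {1, −1} and b ∉ {1, −1}. If Δ₁ := a² + 4·a·b^{−1}·(a·b^{−1} − 1) and Δ₂ := b² + 4·a^{−1}·b·(a^{−1}·b − 1) are both non-squares in K, then the (a,b)-dynomial minimal solution over K is irreducible. -/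
open Quiddity

namespace Stmt10
open Quiddity

/- ### Algebraic part -/

variable {A : Type*} [CommRing A]

/-- Chebyshev-like sequence. -/
def P (t : A) : ℕ → A
  | 0 => 0
  | 1 => 1
  | n + 2 => t * P t (n+1) - P t n

lemma P_add_two (t : A) (n : ℕ) : P t (n+2) = t * P t (n+1) - P t n := rfl

lemma mMat_append (s r : List A) : mMat (s ++ r) = mMat r * mMat s := by
  induction s with
  | nil => simp [mMat]
  | cons a s ih => simp [mMat, ih, mul_assoc]

lemma P_inv (t : A) (j : ℕ) :
    P t (j+1) * P t (j+1) - t * P t (j+1) * P t j + P t j * P t j = 1 := by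
  induction j with
  | zero => simp [P]
  | succ j ih =>
    have h2 : P t (j+1+1) = t * P t (j+1) - P t j := P_add_two t j
    rw [h2]; linear_combination ih

lemma mMat_dyn (c d : A) (j : ℕ) :
    mMat (dynList j c d) =
      !![P (c*d-2) j + P (c*d-2) (j+1), -(d * P (c*d-2) j);
         c * P (c*d-2) j, P (c*d-2) (j+1) - (c*d-1) * P (c*d-2) j] := by
  induction j with
  | zero => simp [dynList, mMat, P]; exact Matrix.one_fin_two
  | succ j ih =>
    show mMat (c :: d :: dynList j c d) = _
    simp only [mMat, ih]
    rw [Matrix.mul_fin_two, Matrix.mul_fin_two]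
    have h2 : P (c*d-2) (j+1+1) = (c*d-2) * P (c*d-2) (j+1) - P (c*d-2) j := P_add_two _ j
    rw [h2]
    ext i j'
    fin_cases i <;> fin_cases j' <;> simp <;> ring

lemma mMat_dyn_snoc (c d : A) (j : ℕ) :
    mMat (dynList j c d ++ [c]) =
      !![c * P (c*d-2) (j+1), -(P (c*d-2) j + P (c*d-2) (j+1));
         P (c*d-2) j + P (c*d-2) (j+1), -(d * P (c*d-2) j)] := by
  rw [mMat_append, mMat_dyn]
  show (1 : Matrix (Fin 2) (Fin 2) A) * !![c,-1;1,0] * _ = _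
  rw [one_mul]
  ext i j'
  fin_cases i <;> fin_cases j' <;> simp <;> ring

/-- From a quiddity of the form `u :: w ++ [v]`, the `(0,0)` entry of `mMat w` is `±1`. -/
lemma sandwich {w : List A} {u v : A} (h : IsQuiddity (u :: w ++ [v])) :
    mMat w 0 0 = 1 ∨ mMat w 0 0 = -1 := by
  have e : mMat (u :: w ++ [v]) = !![v,-1;1,0] * mMat w * !![u,-1;1,0] := by
    show mMat ((u :: w) ++ [v]) = _
    rw [mMat_append]
    show (1 : Matrix (Fin 2) (Fin 2) A) * !![v,-1;1,0] * (mMat w * !![u,-1;1,0]) = _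
    rw [one_mul, mul_assoc]
  rcases h with h | h <;> rw [e] at h <;> [right; left] <;>
    have h11 := congrFun (congrFun h 1) 1 <;>
    simp [Matrix.mul_apply, Fin.sum_univ_two, Matrix.one_apply, Matrix.vecMul,
      Matrix.vecHead, Matrix.vecTail, dotProduct] at h11 <;>
    first | linear_combination h11 | linear_combination -h11

section FieldLemmas
variable {K : Type*} [Field K]

lemma even_case {c d u v : K} (hcd : c * d ≠ 0) (j : ℕ)
    (h : IsQuiddity (u :: dynList (j+1) c d ++ [v])) :
    P (c*d-2) (j+1) = 0 ∨ P (c*d-2) (j+2) = 0 := by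
  have hN : P (c*d-2) (j+1) + P (c*d-2) (j+1+1) = 1
      ∨ P (c*d-2) (j+1) + P (c*d-2) (j+1+1) = -1 := by
    have h' := sandwich h
    rw [mMat_dyn] at h'
    simpa using h'
  have hinv : P (c*d-2) (j+2) * P (c*d-2) (j+2) - (c*d-2) * P (c*d-2) (j+2) * P (c*d-2) (j+1)
      + P (c*d-2) (j+1) * P (c*d-2) (j+1) = 1 := P_inv (c*d-2) (j+1)
  have hz : c * d * (P (c*d-2) (j+1) * P (c*d-2) (j+2)) = 0 := by
    rcases hN with h' | h'
    · linear_combination (P (c*d-2) (j+1) + P (c*d-2) (j+2) + 1) * h' - hinv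
    · linear_combination (P (c*d-2) (j+1) + P (c*d-2) (j+2) - 1) * h' - hinv
  rcases mul_eq_zero.mp hz with h' | h'
  · exact absurd h' hcd
  · exact mul_eq_zero.mp h'

lemma odd_case {c d u v : K} (j : ℕ)
    (h : IsQuiddity (u :: (dynList j c d ++ [c]) ++ [v])) :
    IsSquare (c^2 * d^2 - 4*(c*d) + 4*c^2) := by
  have hN : c * P (c*d-2) (j+1) = 1 ∨ c * P (c*d-2) (j+1) = -1 := by
    have h' := sandwich h
    rw [mMat_dyn_snoc] at h'
    simpa using h'
  have hinv : P (c*d-2) (j+1) * P (c*d-2) (j+1) - (c*d-2) * P (c*d-2) (j+1) * P (c*d-2) j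
      + P (c*d-2) j * P (c*d-2) j = 1 := P_inv (c*d-2) j
  rcases hN with h' | h'
  · exact ⟨2*c*P (c*d-2) j - (c*d-2), by
      linear_combination (-4*c^2) * hinv
        + (-4*(c*d-2)*c*P (c*d-2) j + 4*(c*P (c*d-2) (j+1) + 1)) * h'⟩
  · exact ⟨2*c*P (c*d-2) j + (c*d-2), by
      linear_combination (-4*c^2) * hinv
        + (-4*(c*d-2)*c*P (c*d-2) j + 4*(c*P (c*d-2) (j+1) - 1)) * h'⟩

lemma P_ne_zero {a b : K} {k : ℕ}
    (hmin : ∀ j, 0 < j → IsQuiddity (dynList j a b) → k ≤ j)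
    {i : ℕ} (h0 : 0 < i) (hik : i < k) : P (a*b-2) i ≠ 0 := by
  intro hPi
  obtain ⟨j, rfl⟩ : ∃ j, i = j + 1 := ⟨i - 1, by omega⟩
  have hinv : P (a*b-2) (j+1) * P (a*b-2) (j+1) - (a*b-2) * P (a*b-2) (j+1) * P (a*b-2) j
      + P (a*b-2) j * P (a*b-2) j = 1 := P_inv (a*b-2) j
  have h1 : P (a*b-2) j * P (a*b-2) j = 1 := by
    linear_combination hinv + ((a*b-2) * P (a*b-2) j - P (a*b-2) (j+1)) * hPi
  have hM : mMat (dynList (j+1) a b) = !![-P (a*b-2) j, 0; 0, -P (a*b-2) j] := by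
    rw [mMat_dyn]
    have e2 : P (a*b-2) (j+1+1) = - P (a*b-2) j := by
      rw [P_add_two, hPi]; ring
    rw [hPi, e2]
    ext i' j' ; fin_cases i' <;> fin_cases j' <;> simp
  have hquid : IsQuiddity (dynList (j+1) a b) := by
    rcases mul_self_eq_one_iff.mp h1 with h' | h'
    · right
      rw [hM, h']
      ext i' j' ; fin_cases i' <;> fin_cases j' <;> simp [Matrix.one_apply]
    · left
      rw [hM, h']
      ext i' j' ; fin_cases i' <;> fin_cases j' <;> simp [Matrix.one_apply]
  have := hmin (j+1) (by omega) hquid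
  omega

end FieldLemmas

/- ### Combinatorial part -/

variable {α : Type*}

/-- Alternating list `[a, b, a, b, …]` of length `n`. -/
def altL : ℕ → α → α → List α
  | 0, _, _ => []
  | n + 1, a, b => a :: altL n b a

@[simp] lemma altL_length (n : ℕ) (a b : α) : (altL n a b).length = n := by
  induction n generalizing a b with
  | zero => rfl
  | succ n ih => simp [altL, ih]

lemma dynList_eq_altL [CommRing α] (j : ℕ) (a b : α) : dynList j a b = altL (2*j) a b := by
  induction j with
  | zero => rfl
  | succ j ih =>
    have : 2 * (j+1) = (2*j) + 1 + 1 := by ring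
    rw [this]
    show a :: b :: dynList j a b = a :: altL (2*j+1) b a
    rw [ih]
    rfl

lemma altL_append (m n : ℕ) (a b : α) :
    altL (m + n) a b = altL m a b ++ (if m % 2 = 0 then altL n a b else altL n b a) := by
  induction m generalizing a b with
  | zero => simp [altL]
  | succ m ih =>
    have : m + 1 + n = (m + n) + 1 := by omega
    rw [this]
    show a :: altL (m + n) b a = (a :: altL m b a) ++ _
    rw [ih]
    rcases Nat.mod_two_eq_zero_or_one m with h | h <;>
      simp [h, Nat.add_mod, List.cons_append]

lemma altL_rotate_one (k : ℕ) (a b : α) :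
    (altL (2*(k+1)) a b).rotate 1 = altL (2*(k+1)) b a := by
  have h1 : 2*(k+1) = (2*k+1) + 1 := by omega
  rw [h1]
  show (a :: altL (2*k+1) b a).rotate 1 = _
  rw [List.rotate_cons_succ, List.rotate_zero]
  rw [altL_append (2*k+1) 1 b a]
  have : (2*k+1) % 2 = 1 := by omega
  simp [this]
  rfl

lemma altL_rotate (k i : ℕ) (a b : α) :
    (altL (2*k) a b).rotate i = altL (2*k) a b ∨ (altL (2*k) a b).rotate i = altL (2*k) b a := by
  induction i generalizing a b with
  | zero => left; exact List.rotate_zero _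
  | succ i ih =>
    rcases Nat.eq_zero_or_pos k with rfl | hk
    · left; simp [altL]
    · obtain ⟨k', rfl⟩ : ∃ k', k = k' + 1 := ⟨k - 1, by omega⟩
      have : (altL (2*(k'+1)) a b).rotate (i+1) = ((altL (2*(k'+1)) a b).rotate 1).rotate i := by
        rw [List.rotate_rotate]; congr 1; omega
      rw [this, altL_rotate_one]
      rcases ih b a with h | h
      · right; exact h
      · left; exact h

lemma altL_reverse (k : ℕ) (a b : α) : (altL (2*k) a b).reverse = altL (2*k) b a := by
  induction k generalizing a b with
  | zero => rfl
  | succ k ih =>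
    have h1 : 2*(k+1) = 2*k + 2 := by ring
    rw [h1]
    show (a :: b :: altL (2*k) a b).reverse = altL (2*k + 2) b a
    rw [altL_append (2*k) 2 b a]
    have h2 : (2*k) % 2 = 0 := by omega
    simp [h2, ih]
    rfl

lemma altL_odd [CommRing α] (j : ℕ) (a b : α) :
    altL (2*j+1) a b = dynList j a b ++ [a] := by
  rw [dynList_eq_altL, altL_append (2*j) 1 a b]
  have : (2*j) % 2 = 0 := by omega
  simp [this]
  rfl

/- ### Key lemma -/

lemma key {K : Type*} [Field K] (c d : K) (hc0 : c ≠ 0) (hd0 : d ≠ 0)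
    (hΔc : ¬ IsSquare (c^2*d^2 - 4*(c*d) + 4*c^2))
    (hΔd : ¬ IsSquare (c^2*d^2 - 4*(c*d) + 4*d^2))
    (k : ℕ)
    (Pnz : ∀ i, 0 < i → i < k → P (c*d-2) i ≠ 0)
    (x y : List K) (hx3 : 3 ≤ x.length) (hy3 : 3 ≤ y.length)
    (hyq : IsQuiddity y) (hz : oplus x y = altL (2*k) c d) : False := by
  -- decompose x and y
  obtain ⟨u', x', rfl⟩ : ∃ u' x', x = u' :: x' := by
    cases x with
    | nil => simp at hx3
    | cons u' x' => exact ⟨u', x', rfl⟩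
  rcases x'.eq_nil_or_concat with rfl | ⟨xw, v', rfl⟩
  · simp at hx3
  obtain ⟨u, y', rfl⟩ : ∃ u y', y = u :: y' := by
    cases y with
    | nil => simp at hy3
    | cons u y' => exact ⟨u, y', rfl⟩
  rcases y'.eq_nil_or_concat with rfl | ⟨w, v, rfl⟩
  · simp at hy3
  simp only [List.concat_eq_append] at hx3 hy3 hyq hz
  -- normalize oplus
  have hgl1 : (u :: (w ++ [v])).getLast?.getD 0 = v := by
    rw [show u :: (w ++ [v]) = (u :: w) ++ [v] from rfl, List.getLast?_concat]; rfl
  have hgl2 : (u' :: (xw ++ [v'])).getLast?.getD 0 = v' := by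
    rw [show u' :: (xw ++ [v']) = (u' :: xw) ++ [v'] from rfl, List.getLast?_concat]; rfl
  have hop : oplus (u' :: (xw ++ [v'])) (u :: (w ++ [v])) = (u' + v) :: (xw ++ (v' + u) :: w) := by
    simp [oplus]
    exact ⟨hgl1, hgl2⟩
  rw [hop] at hz
  -- lengths
  set m := xw.length with hm
  set wl := w.length with hwl
  have hlen : m + 2 + wl = 2 * k := by
    have := congrArg List.length hz
    simp at this
    omega
  have hm1 : 1 ≤ m := by have h := hx3; simp at h; omega
  have hwl1 : 1 ≤ wl := by have h := hy3; simp at h; omega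
  -- extract w
  have hw : w = (altL (2*k) c d).drop (m+2) := by
    have := congrArg (List.drop (m+2)) hz
    rw [show ((u' + v) :: (xw ++ (v' + u) :: w)).drop (m+2)
        = (xw ++ (v' + u) :: w).drop (m+1) from rfl] at this
    rw [show m + 1 = xw.length + 1 from by rw [hm]] at this
    rw [List.drop_length_add_append] at this
    simpa using this
  rw [show 2*k = (m+2) + wl from by omega, altL_append (m+2) wl c d] at hw
  rw [List.drop_append_of_le_length (by simp)] at hw
  have hnil : List.drop (m + 2) (altL (m+2) c d) = [] :=
    List.drop_eq_nil_of_le (by simp)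
  rw [hnil, List.nil_append] at hw
  -- now w = altL wl c' d' with (c',d') depending on parity of m
  have main : ∀ c' d' : K, c' * d' = c * d → (c' = c ∨ c' = d) →
      w = altL wl c' d' → False := by
    intro c' d' hcd' hc' hw'
    rcases Nat.even_or_odd wl with ⟨j', hj'⟩ | ⟨j, hj⟩
    · -- even interior
      obtain ⟨j, rfl⟩ : ∃ j, j' = j + 1 := ⟨j' - 1, by omega⟩
      have hwd : w = dynList (j+1) c' d' := by
        rw [hw', dynList_eq_altL]; congr 1; omega
      rw [hwd] at hyq
      rcases even_case (by rw [hcd']; exact mul_ne_zero hc0 hd0) j hyq with h' | h'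
      · rw [hcd'] at h'
        exact Pnz (j+1) (by omega) (by omega) h'
      · rw [hcd'] at h'
        exact Pnz (j+2) (by omega) (by omega) h'
    · -- odd interior
      have hwd : w = dynList j c' d' ++ [c'] := by
        rw [hw', show wl = 2*j+1 from by omega, altL_odd]
      rw [hwd] at hyq
      have hsq := odd_case j hyq
      have hsq' : IsSquare (c^2*d^2 - 4*(c*d) + 4*c'^2) := by
        have e : c'^2*d'^2 - 4*(c'*d') + 4*c'^2 = c^2*d^2 - 4*(c*d) + 4*c'^2 := by
          have h1 : c'^2*d'^2 = (c'*d')^2 := by ring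
          have h2 : c^2*d^2 = (c*d)^2 := by ring
          rw [h1, h2, hcd']
        rwa [e] at hsq
      rcases hc' with h | h
      · rw [h] at hsq'; exact hΔc hsq'
      · rw [h] at hsq'; exact hΔd hsq'
  rcases Nat.mod_two_eq_zero_or_one (m+2) with hp | hp <;> rw [hp] at hw <;> simp at hw
  · exact main c d rfl (Or.inl rfl) hw
  · exact main d c (mul_comm d c) (Or.inr rfl) hw

/- bounds sanity: in even case need j+2 < k: from hlen: m+2+wl = 2k, wl = 2(j+1), m ≥ 1:
   2j+2 ≤ 2k-3 so 2j ≤ 2k-5, j ≤ k-3, j+2 ≤ k-1 < k. omega gets this from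
   hlen, hm1, hj' : wl = j' + j' (Even def). -/

end Stmt10

/-- over a finite field of characteristic ≠ 2, if the two discriminants
`Δ₁` and `Δ₂` are non-squares then the `(a,b)`-dynomial minimal solution is irreducible. -/
theorem stmt10 (K : Type*) [Field K] [Fintype K] (hchar : ringChar K ≠ 2)
    (a b : K) (ha0 : a ≠ 0) (hb0 : b ≠ 0) (hab : a ≠ b)
    (ha1 : a ≠ 1) (ha1' : a ≠ -1) (hb1 : b ≠ 1) (hb1' : b ≠ -1)
    (hΔ1 : ¬ IsSquare (a ^ 2 + 4 * (a * b⁻¹) * (a * b⁻¹ - 1)))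
    (hΔ2 : ¬ IsSquare (b ^ 2 + 4 * (a⁻¹ * b) * (a⁻¹ * b - 1)))
    (k : ℕ) (hk : 0 < k)
    (hq : IsQuiddity (dynList k a b))
    (hmin : ∀ j, 0 < j → IsQuiddity (dynList j a b) → k ≤ j) :
    ¬ QuiddityReducible (dynList k a b) := by

  intro hred
  obtain ⟨x, y, hx3, hy3, hyq, hequiv⟩ := hred
  -- translate discriminant hypotheses
  have hΔc : ¬ IsSquare (a^2*b^2 - 4*(a*b) + 4*a^2) := by
    rintro ⟨r, hr⟩
    apply hΔ1
    refine ⟨r * b⁻¹, ?_⟩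
    field_simp
    linear_combination hr
  have hΔd : ¬ IsSquare (a^2*b^2 - 4*(a*b) + 4*b^2) := by
    rintro ⟨r, hr⟩
    apply hΔ2
    refine ⟨r * a⁻¹, ?_⟩
    field_simp
    linear_combination hr
  have Pnz : ∀ i, 0 < i → i < k → Stmt10.P (a*b-2) i ≠ 0 :=
    fun i h0 hik => Stmt10.P_ne_zero hmin h0 hik
  -- the equivalent tuple is an alternating word
  have hz : oplus x y = Stmt10.altL (2*k) a b ∨ oplus x y = Stmt10.altL (2*k) b a := by
    rw [Stmt10.dynList_eq_altL] at hequiv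
    rcases hequiv with h | h
    · obtain ⟨i, hi⟩ := h
      rcases Stmt10.altL_rotate k i a b with h' | h' <;> rw [hi] at h'
      · left; exact h'
      · right; exact h'
    · rw [Stmt10.altL_reverse] at h
      obtain ⟨i, hi⟩ := h
      rcases Stmt10.altL_rotate k i b a with h' | h' <;> rw [hi] at h'
      · right; exact h'
      · left; exact h'
  rcases hz with hz | hz
  · exact Stmt10.key a b ha0 hb0 hΔc hΔd k Pnz x y hx3 hy3 hyq hz
  · apply Stmt10.key b a hb0 ha0 (by rwa [show b^2*a^2 - 4*(b*a) + 4*b^2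
        = a^2*b^2 - 4*(a*b) + 4*b^2 from by ring]) (by rwa [show b^2*a^2 - 4*(b*a) + 4*a^2
        = a^2*b^2 - 4*(a*b) + 4*a^2 from by ring]) k
        (by rwa [show b*a = a*b from mul_comm b a]) x y hx3 hy3 hyq hz
end

section
/- Let K be a finite field, u a unit of K, m the size of the u-trinomial minimal solution over K, and o(u) the multiplicative order of u in K^*. Then: if K has characteristic 2, m = 3·o(u); if K has characteristic ≠ 2 and o(u) is even, m = 3·o(u)/2; if K has characteristic ≠ 2 and o(u) is odd, m = 3·o(u). -/
open Quiddity

lemma triList_length {A : Type*} [CommRing A] (k : ℕ) (a b : A) :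
    (triList k a b).length = 3 * k := by
  induction k with
  | zero => rfl
  | succ n ih => simp [triList, ih]; omega

lemma mMat_triList {K : Type*} [Field K] (u v : K) (h : u * v = 1) (k : ℕ) :
    mMat (triList k u v) =
      !![(-u)^k, (-1)^(k+1) * v * (u^k - v^k); 0, (-v)^k] := by
  induction k with
  | zero => simp [triList, mMat, Matrix.one_fin_two]
  | succ n ih =>
    show mMat (u :: v :: v :: triList n u v) = _
    simp only [mMat, ih, Matrix.mul_fin_two]
    ext i j
    fin_cases i <;> fin_cases j <;> simp <;> ring_nf
    · linear_combination ((-1:K))^n*(v*v^n)*h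
    · linear_combination (-((-1:K))^n*u^n)*h
    · linear_combination ((-1:K))^n*v^n*h

lemma quid_iff {K : Type*} [Field K] (u : Kˣ) (k : ℕ) :
    IsQuiddity (triList k (u : K) ((u⁻¹ : Kˣ) : K)) ↔ orderOf u ∣ 2 * k := by
  set v : K := ((u⁻¹ : Kˣ) : K) with hv
  have huv : (u : K) * v = 1 := by rw [hv]; exact_mod_cast u.mul_inv
  rw [orderOf_dvd_iff_pow_eq_one]
  have hcast : (u ^ (2 * k) = 1) ↔ ((u : K) ^ (2 * k) = 1) := by
    rw [Units.ext_iff]; push_cast; rfl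
  rw [hcast]
  have hv0 : v ≠ 0 := by
    intro h0
    rw [h0, mul_zero] at huv
    exact one_ne_zero huv.symm
  constructor
  · rintro (h | h) <;>
    · have h01 := congrFun (congrFun (h.symm.trans (mMat_triList (u : K) v huv k)) 0) 1
      simp [Matrix.one_apply] at h01
      have hk : (u : K) ^ k = v ^ k := by
        rcases h01 with h01 | h01
        · exact absurd h01 hv0
        · exact sub_eq_zero.mp h01
      have h2 : (u : K) ^ (2 * k) = ((u : K) * v) ^ k := by
        rw [two_mul, pow_add, mul_pow, hk]
      rw [h2, huv, one_pow]
  · intro h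
    have hsq : (u : K) ^ k = 1 ∨ (u : K) ^ k = -1 := by
      rw [← mul_self_eq_one_iff, ← pow_add]
      rw [two_mul] at h; exact h
    have huvk : ((u : K) * v) ^ k = 1 := by rw [huv, one_pow]
    have hvk : v ^ k = (u : K) ^ k := by
      rcases hsq with h1 | h1
      · rw [mul_pow, h1, one_mul] at huvk
        rw [huvk, h1]
      · rw [mul_pow, h1, neg_one_mul, neg_eq_iff_eq_neg] at huvk
        rw [huvk, h1]
    have hc : mMat (triList k (u : K) v) =
        !![((-1:K))^k * (u:K)^k, 0; 0, ((-1:K))^k * (u:K)^k] := by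
      rw [mMat_triList (u : K) v huv k, hvk, sub_self, mul_zero,
          show (-v) = (-1:K)*v by ring, show (-(u:K)) = (-1:K)*(u:K) by ring,
          mul_pow, mul_pow, hvk]
    have mneg : (-(1 : Matrix (Fin 2) (Fin 2) K)) = !![-1, 0; 0, -1] := by
      rw [Matrix.one_fin_two]; ext i j; fin_cases i <;> fin_cases j <;> simp
    unfold IsQuiddity
    rcases hsq with h1 | h1 <;> rcases Nat.even_or_odd k with hp | hp
    · left; rw [hc, h1, hp.neg_one_pow, Matrix.one_fin_two]; norm_num
    · right; rw [hc, h1, hp.neg_one_pow, mneg]; norm_num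
    · right; rw [hc, h1, hp.neg_one_pow, mneg]; norm_num
    · left; rw [hc, h1, hp.neg_one_pow, Matrix.one_fin_two]; norm_num


/-- the size `m = 3k` of the `u`-trinomial minimal solution over a finite
field in terms of the multiplicative order of `u`. -/
theorem stmt12 (K : Type*) [Field K] [Fintype K] (u : Kˣ) (k : ℕ) (hk : 0 < k)
    (hq : IsQuiddity (triList k (u : K) ((u⁻¹ : Kˣ) : K)))
    (hmin : ∀ j, 0 < j → IsQuiddity (triList j (u : K) ((u⁻¹ : Kˣ) : K)) → k ≤ j) :
    (ringChar K = 2 →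
      (triList k (u : K) ((u⁻¹ : Kˣ) : K)).length = 3 * orderOf u) ∧
    (ringChar K ≠ 2 → Even (orderOf u) →
      (triList k (u : K) ((u⁻¹ : Kˣ) : K)).length = 3 * orderOf u / 2) ∧
    (ringChar K ≠ 2 → Odd (orderOf u) →
      (triList k (u : K) ((u⁻¹ : Kˣ) : K)).length = 3 * orderOf u) := by
  have hlen := triList_length k (u : K) ((u⁻¹ : Kˣ) : K)
  set d := orderOf u with hd
  have hd0 : 0 < d := orderOf_pos u
  have hdvd : d ∣ 2 * k := (quid_iff u k).mp hq
  -- if d is odd then k = d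
  have keq_odd : Odd d → k = d := by
    intro ho
    have h2nd : ¬ (2 ∣ d) := by have := Nat.odd_iff.mp ho; omega
    have hco : Nat.Coprime d 2 :=
      Nat.coprime_comm.mp ((Nat.prime_two.coprime_iff_not_dvd).mpr h2nd)
    have hdk : d ∣ k := hco.dvd_of_dvd_mul_left hdvd
    have h1 : d ≤ k := Nat.le_of_dvd hk hdk
    have h2 : k ≤ d := hmin d hd0 ((quid_iff u d).mpr ⟨2, by ring⟩)
    omega
  -- if d is even then 2 * k = d
  have keq_even : Even d → 2 * k = d := by
    intro he
    obtain ⟨m, hm⟩ := he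
    have hm0 : 0 < m := by omega
    have h1 : k ≤ m := hmin m hm0 ((quid_iff u m).mpr ⟨1, by omega⟩)
    have h2 : m ∣ k := by
      obtain ⟨c, hc⟩ := hdvd
      refine ⟨c, ?_⟩
      have h4 : 2 * k = 2 * (m * c) := by rw [hc, hm]; ring
      omega
    have h3 : m ≤ k := Nat.le_of_dvd hk h2
    omega
  -- char 2 implies d odd
  have hchar2_odd : ringChar K = 2 → Odd d := by
    intro h2
    have h2K : ((2 : ℕ) : K) = 0 := by rw [← h2]; exact ringChar.Nat.cast_ringChar
    have hneg : (-1 : K) = 1 := by push_cast at h2K; linear_combination -h2K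
    rcases Nat.even_or_odd d with he | ho
    · exfalso
      obtain ⟨m, hm⟩ := he
      have hm0 : 0 < m := by omega
      have hud : (u : K) ^ d = 1 := by
        have h5 : u ^ d = 1 := by rw [hd]; exact pow_orderOf_eq_one u
        have h6 := congrArg (Units.val) h5
        push_cast at h6
        exact h6
      have hum : (u : K) ^ m = 1 ∨ (u : K) ^ m = -1 := by
        rw [← mul_self_eq_one_iff, ← pow_add]
        rw [hm] at hud; exact hud
      have hum1 : (u : K) ^ m = 1 := by
        rcases hum with h | h
        · exact h
        · rw [h, hneg]
      have hdm : d ∣ m := by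
        rw [hd]
        rw [orderOf_dvd_iff_pow_eq_one, Units.ext_iff]
        push_cast
        exact hum1
      have := Nat.le_of_dvd hm0 hdm
      omega
    · exact ho
  refine ⟨?_, ?_, ?_⟩
  · intro h2
    rw [hlen, keq_odd (hchar2_odd h2)]
  · intro _ he
    have := keq_even he
    rw [hlen]
    omega
  · intro _ ho
    rw [hlen, keq_odd ho]
end
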